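/- arXiv:1006.0268 — 2 statements merged into one kernel-verified Lean document; each statement's English description precedes it below -/
import Mathlib

section
/- (Stanley's vanishing criterion) Let λ be a partition of k+1 and σ ∈ S_{k+1} with cycle lengths ℓ_1, ..., ℓ_j. Let h_1, ..., h_{k+1} be the hook lengths of λ. If the character value χ^λ(σ) of the irreducible representation ρ_λ of S_{k+1} at σ is nonzero, then ∏_{i=1}^{j}(1 - s^{ℓ_i}) divides ∏_{i=1}^{k+1}(1 - s^{h_i}) in ℤ[s]. -/
open Equiv Finset

/-- The character `χ^λ(σ)` of the irreducible representation of `S_N` attached to the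
partition `λ ⊢ N` (given by its row-length function `lam`), defined via the Frobenius
character formula: `χ^λ(σ)` is the coefficient of `x^{λ+δ}` (with `δ = (N-1, N-2, …, 0)`)
in `a_δ(x) · ∏_i p_{ℓ_i}(x)`, where `a_δ = ∑_{w ∈ S_N} sgn(w) ∏_j x_{w(j)}^{δ_j}` is the
Vandermonde alternant, the `ℓ_i` are the cycle lengths of `σ` (fixed points included),
and `p_ℓ = ∑_i x_i^ℓ` is the power sum. -/
noncomputable def frobChar (N : ℕ) (lam : ℕ → ℕ) (σ : Equiv.Perm (Fin N)) : ℤ :=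
  MvPolynomial.coeff
    (Finsupp.equivFunOnFinite.symm (fun i : Fin N => lam (i : ℕ) + (N - 1 - (i : ℕ))))
    ((∑ w : Equiv.Perm (Fin N), (Equiv.Perm.sign w : ℤ) •
        ∏ j : Fin N, (MvPolynomial.X (w j) : MvPolynomial (Fin N) ℤ) ^ (N - 1 - (j : ℕ))) *
      ((σ.cycleType + Multiset.replicate (N - σ.support.card) 1).map
        (fun ℓ => ∑ i : Fin N, (MvPolynomial.X i : MvPolynomial (Fin N) ℤ) ^ ℓ)).prod)

/-- The column lengths (conjugate partition) of the partition with rows `lam`. -/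
def conjPart (N : ℕ) (lam : ℕ → ℕ) (j : ℕ) : ℕ :=
  ((Finset.range N).filter fun i => j < lam i).card

/-- The hook length of the cell in (0-indexed) row `i` and column `j`. -/
def hookLen (N : ℕ) (lam : ℕ → ℕ) (i j : ℕ) : ℕ :=
  (lam i - j) + (conjPart N lam j - i) - 1


namespace StanleyAux

open Equiv Finset MvPolynomial

/-! ### Counting lemmas -/

lemma card_filter_mod (b d : ℕ) :
    ((range b).filter (fun m => m % d = b % d)).card = b / d := by
  rw [← Nat.Ioc_filter_dvd_card_eq_div b d]
  apply Finset.card_bij' (fun m _ => b - m) (fun j _ => b - j)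
  · intro m hm
    simp only [mem_filter, mem_range] at hm
    simp only [mem_filter, mem_Ioc]
    refine ⟨⟨by omega, by omega⟩, (Nat.modEq_iff_dvd' (by omega)).mp hm.2⟩
  · intro j hj
    simp only [mem_filter, mem_Ioc] at hj
    simp only [mem_filter, mem_range]
    refine ⟨by omega, (Nat.modEq_iff_dvd' (by omega)).mpr ?_⟩
    have : b - (b - j) = j := by omega
    rw [this]; exact hj.2
  · intro m hm; simp only [mem_filter, mem_range] at hm; omega
  · intro j hj; simp only [mem_filter, mem_Ioc] at hj; omega

/-- number of "d-divisible hooks" of a beta-set `B`. -/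
def cN (d : ℕ) (B : Finset ℕ) : ℕ :=
  ∑ b ∈ B, (((range b).filter (fun m => m % d = b % d)).filter (fun m => m ∉ B)).card

/-- number of same-residue pairs, counted at the larger element. -/
def PT (d : ℕ) (B : Finset ℕ) : ℕ :=
  ∑ b ∈ B, (((range b).filter (fun m => m % d = b % d)).filter (fun m => m ∈ B)).card

lemma cN_add_PT (d : ℕ) (B : Finset ℕ) : cN d B + PT d B = ∑ b ∈ B, b / d := by
  unfold cN PT
  rw [← Finset.sum_add_distrib]
  refine Finset.sum_congr rfl (fun b _ => ?_)
  rw [add_comm, Finset.card_filter_add_card_filter_not (fun m => m ∈ B)]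
  exact card_filter_mod b d

lemma PT_step (d : ℕ) (B : Finset ℕ) (b ℓ : ℕ) (hb : b ∈ B) (hdl : d ∣ ℓ)
    (hl : 0 < ℓ) (hlb : ℓ ≤ b) (hnB : b - ℓ ∉ B) :
    PT d (insert (b - ℓ) (B.erase b)) = PT d B := by
  classical
  set B' := insert (b - ℓ) (B.erase b) with hB'
  have hmod : (b - ℓ) % d = b % d := by
    obtain ⟨c, rfl⟩ := hdl
    conv_rhs => rw [show b = (b - d * c) + d * c by omega]
    rw [Nat.add_mul_mod_self_left]
  have hmemB' : ∀ x, x ∈ B' ↔ (x = b - ℓ ∨ (x ∈ B ∧ x ≠ b)) := by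
    intro x
    simp only [hB', Finset.mem_insert, Finset.mem_erase]
    tauto
  set sub : ℕ → ℕ := fun x => if x = b then b - ℓ else x with hsub
  set sub' : ℕ → ℕ := fun x => if x = b - ℓ then b else x with hsub'
  have hsubB' : ∀ x, x ∈ B → sub x ∈ B' := by
    intro x hx
    rw [hmemB']
    by_cases h : x = b
    · left; simp [hsub, h]
    · right
      have : sub x = x := by simp [hsub, h]
      rw [this]
      exact ⟨hx, h⟩
  have hsub'B : ∀ x, x ∈ B' → sub' x ∈ B := by
    intro x hx
    rw [hmemB'] at hx
    rcases hx with h | ⟨h1, h2⟩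
    · simp [hsub', h, hb]
    · have : x ≠ b - ℓ := fun hc => hnB (hc ▸ h1)
      simp [hsub', this, h1]
  have hsubmod : ∀ x, sub x % d = x % d := by
    intro x; by_cases h : x = b <;> simp [hsub, h, hmod]
  have hsub'mod : ∀ x, sub' x % d = x % d := by
    intro x; by_cases h : x = b - ℓ <;> simp [hsub', h, ← hmod]
  have hsub'sub : ∀ x, x ∈ B → sub' (sub x) = x := by
    intro x hx
    by_cases h : x = b
    · simp [hsub, hsub', h]
    · have : x ≠ b - ℓ := fun hc => hnB (hc ▸ hx)
      simp [hsub, hsub', h, this]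
  have hsubsub' : ∀ x, x ∈ B' → sub (sub' x) = x := by
    intro x hx
    rw [hmemB'] at hx
    rcases hx with h | ⟨h1, h2⟩
    · simp [hsub, hsub', h]
    · have : x ≠ b - ℓ := fun hc => hnB (hc ▸ h1)
      simp [hsub, hsub', h2, this]
  have hsub'inj : ∀ x y, x ∈ B' → y ∈ B' → sub' x = sub' y → x = y := by
    intro x y hx hy hxy
    have := congrArg sub hxy
    rwa [hsubsub' x hx, hsubsub' y hy] at this
  have hsubinj : ∀ x y, x ∈ B → y ∈ B → sub x = sub y → x = y := by
    intro x y hx hy hxy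
    have := congrArg sub' hxy
    rwa [hsub'sub x hx, hsub'sub y hy] at this
  have hPT : ∀ C : Finset ℕ, PT d C =
      (C.sigma (fun x => ((range x).filter (fun m => m % d = x % d)).filter
        (fun m => m ∈ C))).card := fun C => (Finset.card_sigma _ _).symm
  rw [hPT, hPT]
  have pairmem : ∀ (C : Finset ℕ) (u v : ℕ), u ∈ C → v ∈ C → u ≠ v → u % d = v % d →
      (⟨max u v, min u v⟩ : Σ _ : ℕ, ℕ) ∈ C.sigma (fun x =>
        ((range x).filter (fun m => m % d = x % d)).filter (fun m => m ∈ C)) := by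
    intro C u v hu hv huv hmd
    simp only [Finset.mem_sigma, Finset.mem_filter, Finset.mem_range]
    rcases le_total u v with h | h
    · rw [max_eq_right h, min_eq_left h]; exact ⟨hv, ⟨by omega, hmd⟩, hu⟩
    · rw [max_eq_left h, min_eq_right h]; exact ⟨hu, ⟨by omega, hmd.symm⟩, hv⟩
  apply Finset.card_bij'
    (i := fun a _ => (⟨max (sub' a.1) (sub' a.2), min (sub' a.1) (sub' a.2)⟩ : Σ _ : ℕ, ℕ))
    (j := fun a _ => (⟨max (sub a.1) (sub a.2), min (sub a.1) (sub a.2)⟩ : Σ _ : ℕ, ℕ))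
  · rintro ⟨x, y⟩ ha
    simp only [Finset.mem_sigma, Finset.mem_filter, Finset.mem_range] at ha
    obtain ⟨hx, ⟨hyx, hymod⟩, hy⟩ := ha
    exact pairmem B (sub' x) (sub' y) (hsub'B x hx) (hsub'B y hy)
      (fun h => by have := hsub'inj x y hx hy h; omega)
      (by rw [hsub'mod, hsub'mod, hymod])
  · rintro ⟨x, y⟩ ha
    simp only [Finset.mem_sigma, Finset.mem_filter, Finset.mem_range] at ha
    obtain ⟨hx, ⟨hyx, hymod⟩, hy⟩ := ha
    exact pairmem B' (sub x) (sub y) (hsubB' x hx) (hsubB' y hy)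
      (fun h => by have := hsubinj x y hx hy h; omega)
      (by rw [hsubmod, hsubmod, hymod])
  · rintro ⟨x, y⟩ ha
    simp only [Finset.mem_sigma, Finset.mem_filter, Finset.mem_range] at ha
    obtain ⟨hx, ⟨hyx, hymod⟩, hy⟩ := ha
    dsimp only
    rcases le_total (sub' x) (sub' y) with h | h
    · rw [max_eq_right h, min_eq_left h, hsubsub' y hy, hsubsub' x hx,
        max_eq_right hyx.le, min_eq_left hyx.le]
    · rw [max_eq_left h, min_eq_right h, hsubsub' y hy, hsubsub' x hx,
        max_eq_left hyx.le, min_eq_right hyx.le]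
  · rintro ⟨x, y⟩ ha
    simp only [Finset.mem_sigma, Finset.mem_filter, Finset.mem_range] at ha
    obtain ⟨hx, ⟨hyx, hymod⟩, hy⟩ := ha
    dsimp only
    rcases le_total (sub x) (sub y) with h | h
    · rw [max_eq_right h, min_eq_left h, hsub'sub y hy, hsub'sub x hx,
        max_eq_right hyx.le, min_eq_left hyx.le]
    · rw [max_eq_left h, min_eq_right h, hsub'sub y hy, hsub'sub x hx,
        max_eq_left hyx.le, min_eq_right hyx.le]

lemma cN_step (d : ℕ) (hd : 0 < d) (B : Finset ℕ) (b ℓ : ℕ) (hb : b ∈ B) (hdl : d ∣ ℓ)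
    (hl : 0 < ℓ) (hlb : ℓ ≤ b) (hnB : b - ℓ ∉ B) :
    cN d (insert (b - ℓ) (B.erase b)) + ℓ / d = cN d B := by
  set B' := insert (b - ℓ) (B.erase b) with hB'
  have hnotmem : b - ℓ ∉ B.erase b := fun h => hnB (Finset.mem_of_mem_erase h)
  have hS : (∑ x ∈ B', x / d) + ℓ / d = ∑ x ∈ B, x / d := by
    rw [hB', Finset.sum_insert hnotmem, ← Finset.add_sum_erase _ _ hb]
    have : (b - ℓ) / d + ℓ / d = b / d := by
      obtain ⟨c, rfl⟩ := hdl
      conv_rhs => rw [show b = (b - d * c) + d * c by omega]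
      rw [Nat.mul_div_cancel_left _ hd, Nat.add_mul_div_left _ _ hd]
    omega
  have h1 := cN_add_PT d B
  have h2 := cN_add_PT d B'
  have h3 := PT_step d B b ℓ hb hdl hl hlb hnB
  rw [← hB'] at h3
  omega

variable {N : ℕ}

/-- alternating property -/
def IsAlt (N : ℕ) (A : MvPolynomial (Fin N) ℤ) : Prop :=
  ∀ w : Equiv.Perm (Fin N), rename ⇑w A = (Equiv.Perm.sign w : ℤ) • A

lemma rename_powsum (w : Equiv.Perm (Fin N)) (ℓ : ℕ) :
    rename ⇑w (∑ i : Fin N, (X i : MvPolynomial (Fin N) ℤ) ^ ℓ) =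
      ∑ i : Fin N, (X i : MvPolynomial (Fin N) ℤ) ^ ℓ := by
  rw [map_sum]
  simp only [map_pow, rename_X]
  exact Equiv.sum_comp w (fun i => (X i : MvPolynomial (Fin N) ℤ) ^ ℓ)

lemma isAlt_mul_prod_powsum (A : MvPolynomial (Fin N) ℤ) (hA : IsAlt N A) (M : Multiset ℕ) :
    IsAlt N (A * (M.map (fun ℓ => ∑ i : Fin N, (X i : MvPolynomial (Fin N) ℤ) ^ ℓ)).prod) := by
  intro w
  have hsymm : rename ⇑w (M.map (fun ℓ => ∑ i : Fin N,
      (X i : MvPolynomial (Fin N) ℤ) ^ ℓ)).prod =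
      (M.map (fun ℓ => ∑ i : Fin N, (X i : MvPolynomial (Fin N) ℤ) ^ ℓ)).prod := by
    rw [map_multiset_prod, Multiset.map_map]
    congr 1
    apply Multiset.map_congr rfl
    intro ℓ _
    exact rename_powsum w ℓ
  rw [map_mul, hA w, hsymm, smul_mul_assoc]

lemma isAlt_bigA : IsAlt N (∑ w : Equiv.Perm (Fin N), (Equiv.Perm.sign w : ℤ) •
    ∏ j : Fin N, (X (w j) : MvPolynomial (Fin N) ℤ) ^ (N - 1 - (j : ℕ))) := by
  intro w
  rw [map_sum, Finset.smul_sum]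
  rw [← Equiv.sum_comp (Equiv.mulLeft w) (fun u => (Equiv.Perm.sign w : ℤ) •
    ((Equiv.Perm.sign u : ℤ) • ∏ j : Fin N, (X (u j) : MvPolynomial (Fin N) ℤ) ^ (N - 1 - (j : ℕ))))]
  apply Finset.sum_congr rfl
  intro u _
  have h1 : (Equiv.mulLeft w) u = w * u := rfl
  rw [h1, map_smul, map_prod]
  simp only [map_pow, rename_X]
  have h2 : ∀ j : Fin N, (w * u) j = w (u j) := fun _ => rfl
  simp only [h2]
  rw [smul_smul]
  have h3 : Equiv.Perm.sign (w * u) = Equiv.Perm.sign w * Equiv.Perm.sign u := map_mul _ _ _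
  have h4 : (Equiv.Perm.sign u : ℤ) =
      (Equiv.Perm.sign w : ℤ) * (Equiv.Perm.sign (w * u) : ℤ) := by
    have hw := congrArg Units.val (Int.units_mul_self (Equiv.Perm.sign w))
    simp only [Units.val_mul, Units.val_one] at hw
    rw [h3]
    push_cast
    rw [← mul_assoc, hw, one_mul]
  rw [← h4]

lemma coeff_eq_zero_of_not_injective (A : MvPolynomial (Fin N) ℤ) (hA : IsAlt N A)
    (v : Fin N →₀ ℕ) (hv : ¬ Function.Injective ⇑v) : coeff v A = 0 := by
  rw [Function.not_injective_iff] at hv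
  obtain ⟨t1, t2, hts, hne⟩ := hv
  set τ := Equiv.swap t1 t2 with hτ
  have hmap : Finsupp.mapDomain ⇑τ v = v := by
    ext a
    rw [Finsupp.mapDomain_equiv_apply]
    by_cases h1 : a = t1
    · have hsy : τ.symm a = t2 := by rw [h1]; simp [hτ]
      rw [hsy, h1]; exact hts.symm
    · by_cases h2 : a = t2
      · have hsy : τ.symm a = t1 := by rw [h2]; simp [hτ]
        rw [hsy, h2]; exact hts
      · have hsy : τ.symm a = a := by simp [hτ, Equiv.swap_apply_of_ne_of_ne h1 h2]
        rw [hsy]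
  have hco := coeff_rename_mapDomain ⇑τ τ.injective A v
  rw [hmap, hA τ] at hco
  have hsign : Equiv.Perm.sign τ = -1 := Equiv.Perm.sign_swap hne
  rw [hsign] at hco
  simp only [Units.val_neg, Units.val_one, neg_smul, one_smul, coeff_neg] at hco
  omega

lemma peel_one (A : MvPolynomial (Fin N) ℤ) (hA : IsAlt N A) (v : Fin N →₀ ℕ)
    (hv : Function.Injective ⇑v) (ℓ : ℕ) (hl : 0 < ℓ)
    (h : coeff v (A * ∑ i : Fin N, (X i : MvPolynomial (Fin N) ℤ) ^ ℓ) ≠ 0) :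
    ∃ (v' : Fin N →₀ ℕ) (b : ℕ), b ∈ Finset.image ⇑v Finset.univ ∧ ℓ ≤ b ∧
      b - ℓ ∉ Finset.image ⇑v Finset.univ ∧
      Function.Injective ⇑v' ∧ coeff v' A ≠ 0 ∧
      Finset.image ⇑v' Finset.univ =
        insert (b - ℓ) ((Finset.image ⇑v Finset.univ).erase b) := by
  rw [Finset.mul_sum] at h
  rw [coeff_sum] at h
  obtain ⟨i, -, hi⟩ := Finset.exists_ne_zero_of_sum_ne_zero h
  rw [X_pow_eq_monomial, coeff_mul_monomial'] at hi
  split_ifs at hi with hle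
  · rw [mul_one] at hi
    have hli : ℓ ≤ v i := by
      have := hle i
      simpa [Finsupp.single_apply] using (Finsupp.le_def.mp hle) i
    set v' : Fin N →₀ ℕ := v - Finsupp.single i ℓ with hv'
    have hv'app : ∀ t, v' t = if t = i then v i - ℓ else v t := by
      intro t
      rw [hv']
      rw [Finsupp.tsub_apply]
      by_cases h1 : t = i
      · subst h1; simp [Finsupp.single_apply]
      · simp [Finsupp.single_apply, Ne.symm h1, h1]
    have hv'inj : Function.Injective ⇑v' := by
      by_contra hni
      exact hi (coeff_eq_zero_of_not_injective A hA v' hni)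
    have hvineq : ∀ t, t ≠ i → v t ≠ v i - ℓ := by
      intro t hti hc
      apply hti
      apply hv'inj
      rw [hv'app t, hv'app i, if_neg hti, if_pos rfl, hc]
    refine ⟨v', v i, Finset.mem_image_of_mem _ (Finset.mem_univ i), hli, ?_, hv'inj, hi, ?_⟩
    · intro hc
      rw [Finset.mem_image] at hc
      obtain ⟨t, -, ht⟩ := hc
      by_cases hti : t = i
      · subst hti; omega
      · exact hvineq t hti ht
    · ext a
      simp only [Finset.mem_image, Finset.mem_insert, Finset.mem_erase, Finset.mem_univ,
        true_and]
      constructor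
      · rintro ⟨t, ht⟩
        rw [hv'app t] at ht
        by_cases hti : t = i
        · rw [if_pos hti] at ht; left; exact ht.symm
        · rw [if_neg hti] at ht
          right
          exact ⟨by rw [← ht]; exact fun hc => hti (hv hc), ⟨t, ht⟩⟩
      · rintro (h1 | ⟨h1, t, h2⟩)
        · exact ⟨i, by rw [hv'app i, if_pos rfl, h1]⟩
        · refine ⟨t, ?_⟩
          have hti : t ≠ i := fun hc => h1 (by rw [← h2, hc])
          rw [hv'app t, if_neg hti, h2]
  · exact absurd rfl hi

lemma peel {N : ℕ} (d : ℕ) (hd : 0 < d) (M : Multiset ℕ) :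
    (∀ ℓ ∈ M, d ∣ ℓ ∧ 0 < ℓ) → ∀ (A : MvPolynomial (Fin N) ℤ), IsAlt N A →
    ∀ (v : Fin N →₀ ℕ), Function.Injective ⇑v →
    coeff v (A * (M.map (fun ℓ => ∑ i : Fin N, (X i : MvPolynomial (Fin N) ℤ) ^ ℓ)).prod) ≠ 0 →
    Multiset.card M ≤ cN d (Finset.image ⇑v Finset.univ) := by
  induction M using Multiset.induction with
  | empty => intros; simp
  | cons ℓ M ih =>
    intro hM A hA v hv h
    have hdl : d ∣ ℓ := (hM ℓ (Multiset.mem_cons_self _ _)).1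
    have hl : 0 < ℓ := (hM ℓ (Multiset.mem_cons_self _ _)).2
    have hre : A * ((ℓ ::ₘ M).map (fun ℓ => ∑ i : Fin N,
        (X i : MvPolynomial (Fin N) ℤ) ^ ℓ)).prod =
        (A * (M.map (fun ℓ => ∑ i : Fin N, (X i : MvPolynomial (Fin N) ℤ) ^ ℓ)).prod) *
          (∑ i : Fin N, (X i : MvPolynomial (Fin N) ℤ) ^ ℓ) := by
      rw [Multiset.map_cons, Multiset.prod_cons]
      ring
    rw [hre] at h
    obtain ⟨v', b, hbmem, hlb, hnB, hv'inj, hv'co, hv'img⟩ :=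
      peel_one _ (isAlt_mul_prod_powsum A hA M) v hv ℓ hl h
    have hih := ih (fun x hx => hM x (Multiset.mem_cons_of_mem hx)) A hA v' hv'inj hv'co
    rw [hv'img] at hih
    have hstep := cN_step d hd (Finset.image ⇑v Finset.univ) b ℓ hbmem hdl hl hlb hnB
    have hld : 1 ≤ ℓ / d := Nat.one_le_div_iff hd |>.mpr (Nat.le_of_dvd hl hdl)
    simp only [Multiset.card_cons]
    omega

section PartStuff

variable (N : ℕ) (lam : ℕ → ℕ)

def bet (i : ℕ) : ℕ := lam i + (N - 1 - i)

variable {N lam}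
variable (hanti : Antitone lam) (hsupp : ∀ i, N ≤ i → lam i = 0)

lemma conj_le (j : ℕ) : conjPart N lam j ≤ N := by
  unfold conjPart
  calc ((Finset.range N).filter fun i => j < lam i).card
      ≤ (Finset.range N).card := Finset.card_le_card (Finset.filter_subset _ _)
    _ = N := Finset.card_range N

include hanti hsupp in
lemma conj_iff (i j : ℕ) : i < conjPart N lam j ↔ j < lam i := by
  set F := (Finset.range N).filter fun x => j < lam x with hF
  have hdc : ∀ x ∈ F, ∀ y, y ≤ x → y ∈ F := by
    intro x hx y hyx
    rw [hF, Finset.mem_filter, Finset.mem_range] at hx ⊢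
    exact ⟨lt_of_le_of_lt hyx hx.1, lt_of_lt_of_le hx.2 (hanti hyx)⟩
  by_cases hiN : i < N
  · constructor
    · intro hic
      by_contra hjl
      push_neg at hjl
      -- i ∉ F, so F ⊆ range i, so card F ≤ i
      have hsub : F ⊆ Finset.range i := by
        intro y hy
        rw [Finset.mem_range]
        by_contra hyi
        push_neg at hyi
        have : i ∈ F := hdc y hy i hyi
        rw [hF, Finset.mem_filter] at this
        omega
      have := Finset.card_le_card hsub
      rw [Finset.card_range] at this
      unfold conjPart at hic
      rw [← hF] at hic
      omega
    · intro hjl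
      have hsub : Finset.range (i + 1) ⊆ F := by
        intro y hy
        rw [Finset.mem_range] at hy
        exact hdc i (by rw [hF, Finset.mem_filter, Finset.mem_range]; exact ⟨hiN, hjl⟩) y
          (by omega)
      have := Finset.card_le_card hsub
      rw [Finset.card_range] at this
      unfold conjPart
      rw [← hF]
      omega
  · push_neg at hiN
    have h0 : lam i = 0 := hsupp i hiN
    have := conj_le (lam := lam) (N := N) j
    constructor
    · intro h; omega
    · intro h; omega

include hanti in
lemma bet_strict {i u : ℕ} (hiu : i < u) (huN : u < N) : bet N lam u < bet N lam i := by
  have := hanti hiu.le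
  unfold bet
  omega

include hanti in
lemma bet_injOn : ∀ x ∈ Finset.range N, ∀ y ∈ Finset.range N,
    bet N lam x = bet N lam y → x = y := by
  intro x hx y hy hxy
  rw [Finset.mem_range] at hx hy
  rcases lt_trichotomy x y with h | h | h
  · have := bet_strict hanti h hy; omega
  · exact h
  · have := bet_strict hanti h hx; omega

end PartStuff

section RowCount

variable {N : ℕ} {lam : ℕ → ℕ} {d : ℕ}
variable (hanti : Antitone lam) (hsupp : ∀ i, N ≤ i → lam i = 0)

include hanti hsupp in
lemma row_count (B : Finset ℕ) (hB : B = (Finset.range N).image (bet N lam))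
    {i : ℕ} (hiN : i < N) :
    ((range (lam i)).filter (fun j => d ∣ hookLen N lam i j)).card =
    (((range (bet N lam i)).filter (fun m => m % d = bet N lam i % d)).filter
      (fun m => m ∉ B)).card := by
  set g : ℕ → ℕ := fun j => N + j - conjPart N lam j with hg
  -- basic facts for j < lam i
  have hfacts : ∀ j, j < lam i → conjPart N lam j ≤ N ∧ i < conjPart N lam j := by
    intro j hj
    exact ⟨conj_le j, (conj_iff hanti hsupp i j).mpr hj⟩
  have f3 : ∀ j, j < lam i → hookLen N lam i j + g j = bet N lam i := by
    intro j hj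
    obtain ⟨h1, h2⟩ := hfacts j hj
    unfold hookLen bet
    simp only [hg]
    omega
  have f4 : ∀ j, j < lam i → g j < bet N lam i := by
    intro j hj
    obtain ⟨h1, h2⟩ := hfacts j hj
    unfold bet
    simp only [hg]
    omega
  have f5 : ∀ j, j < lam i → g j ∉ B := by
    intro j hj hmem
    obtain ⟨h1, h2⟩ := hfacts j hj
    rw [hB, Finset.mem_image] at hmem
    obtain ⟨u, hu, hbu⟩ := hmem
    rw [Finset.mem_range] at hu
    by_cases hcase : u < conjPart N lam j
    · have hlu : j < lam u := (conj_iff hanti hsupp u j).mp hcase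
      unfold bet at hbu
      simp only [hg] at hbu
      omega
    · push_neg at hcase
      have hlu : lam u ≤ j := by
        by_contra hc
        push_neg at hc
        have := (conj_iff hanti hsupp u j).mpr hc
        omega
      unfold bet at hbu
      simp only [hg] at hbu
      omega
  have f6 : ∀ j1 j2, j1 < j2 → j2 < lam i → g j1 < g j2 := by
    intro j1 j2 h12 hj2
    have hc : conjPart N lam j2 ≤ conjPart N lam j1 := by
      apply Finset.card_le_card
      intro x hx
      rw [Finset.mem_filter] at hx ⊢
      exact ⟨hx.1, by omega⟩
    have := conj_le (lam := lam) (N := N) j1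
    simp only [hg]
    omega
  have ginjOn : ∀ x ∈ range (lam i), ∀ y ∈ range (lam i), g x = g y → x = y := by
    intro x hx y hy hxy
    rw [Finset.mem_range] at hx hy
    rcases lt_trichotomy x y with h | h | h
    · have := f6 x y h hy; omega
    · exact h
    · have := f6 y x h hx; omega
  -- Step A : image of the whole row is the complement of B inside range (bet i)
  have stepA : (range (lam i)).image g = (range (bet N lam i)).filter (fun m => m ∉ B) := by
    apply Finset.eq_of_subset_of_card_le
    · intro m hm
      rw [Finset.mem_image] at hm
      obtain ⟨j, hj, rfl⟩ := hm
      rw [Finset.mem_range] at hj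
      rw [Finset.mem_filter, Finset.mem_range]
      exact ⟨f4 j hj, f5 j hj⟩
    · -- card of complement ≤ lam i
      have hcardim : ((range (lam i)).image g).card = lam i := by
        rw [Finset.card_image_of_injOn ginjOn, Finset.card_range]
      have hinB : (range (bet N lam i)).filter (fun m => m ∈ B) =
          (Finset.Ico (i+1) N).image (bet N lam) := by
        ext m
        rw [Finset.mem_filter, Finset.mem_range, Finset.mem_image]
        constructor
        · rintro ⟨hmlt, hmB⟩
          rw [hB, Finset.mem_image] at hmB
          obtain ⟨u, hu, hbu⟩ := hmB
          rw [Finset.mem_range] at hu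
          refine ⟨u, ?_, hbu⟩
          rw [Finset.mem_Ico]
          refine ⟨?_, hu⟩
          by_contra hc
          push_neg at hc
          rcases Nat.lt_or_ge u i with h | h
          · have := bet_strict hanti h hiN; omega
          · have hui : u = i := by omega
            rw [hui] at hbu; omega
        · rintro ⟨u, hu, hbu⟩
          rw [Finset.mem_Ico] at hu
          have := bet_strict hanti hu.1 hu.2
          constructor
          · omega
          · rw [hB, Finset.mem_image]
            exact ⟨u, Finset.mem_range.mpr hu.2, hbu⟩
      have hcardin : ((range (bet N lam i)).filter (fun m => m ∈ B)).card = N - (i+1) := by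
        rw [hinB, Finset.card_image_of_injOn, Nat.card_Ico]
        intro x hx y hy hxy
        simp only [Finset.coe_Ico, Set.mem_Ico] at hx hy
        exact bet_injOn hanti x (Finset.mem_range.mpr hx.2) y (Finset.mem_range.mpr hy.2) hxy
      have hsplit := Finset.card_filter_add_card_filter_not
        (s := range (bet N lam i)) (p := fun m => m ∈ B)
      rw [Finset.card_range] at hsplit
      have hbet : bet N lam i = lam i + (N - 1 - i) := rfl
      omega
  -- Step B
  have hfiltereq : (range (lam i)).filter (fun j => d ∣ hookLen N lam i j) =
      (range (lam i)).filter (fun j => g j % d = bet N lam i % d) := by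
    apply Finset.filter_congr
    intro j hj
    rw [Finset.mem_range] at hj
    have h3 := f3 j hj
    have h4 := f4 j hj
    have : (d ∣ hookLen N lam i j) ↔ (g j ≡ bet N lam i [MOD d]) := by
      rw [Nat.modEq_iff_dvd' (by omega)]
      constructor
      · intro h; have : bet N lam i - g j = hookLen N lam i j := by omega
        rw [this]; exact h
      · intro h; have : bet N lam i - g j = hookLen N lam i j := by omega
        rw [this] at h; exact h
    rw [this]
    exact Iff.rfl
  rw [hfiltereq]
  have himg : ((range (lam i)).filter (fun j => g j % d = bet N lam i % d)).image g =
      ((range (bet N lam i)).filter (fun m => m ∉ B)).filter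
        (fun m => m % d = bet N lam i % d) := by
    rw [← stepA, Finset.filter_image]
  rw [← Finset.card_image_of_injOn (fun x hx y hy hxy => ginjOn x
    (Finset.mem_of_mem_filter x hx) y (Finset.mem_of_mem_filter y hy) hxy), himg,
    Finset.filter_comm]

include hanti hsupp in
lemma total_count (B : Finset ℕ) (hB : B = (Finset.range N).image (bet N lam)) :
    ∑ i ∈ range N, ((range (lam i)).filter (fun j => d ∣ hookLen N lam i j)).card =
      cN d B := by
  unfold cN
  rw [hB, Finset.sum_image (bet_injOn hanti)]
  apply Finset.sum_congr rfl
  intro i hi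
  rw [← hB]
  exact row_count hanti hsupp B hB (Finset.mem_range.mp hi)

end RowCount

lemma prodform (K : ℕ) (T : Multiset ℕ) (hT : ∀ n ∈ T, 0 < n ∧ n ≤ K) :
    (T.map (fun n => (1 : Polynomial ℤ) - Polynomial.X ^ n)).prod =
      (-1) ^ (Multiset.card T) *
        ∏ d ∈ Finset.Icc 1 K,
          (Polynomial.cyclotomic d ℤ) ^ (Multiset.card (T.filter (d ∣ ·))) := by
  induction T using Multiset.induction with
  | empty => simp
  | cons n T ih =>
    have hn := hT n (Multiset.mem_cons_self _ _)
    have hdiv : Nat.divisors n = (Finset.Icc 1 K).filter (· ∣ n) := by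
      ext e
      simp only [Nat.mem_divisors, Finset.mem_filter, Finset.mem_Icc]
      constructor
      · rintro ⟨he, -⟩
        exact ⟨⟨Nat.pos_of_dvd_of_pos he hn.1, le_trans (Nat.le_of_dvd hn.1 he) hn.2⟩, he⟩
      · rintro ⟨-, he⟩
        exact ⟨he, by omega⟩
    have hXn : (1 : Polynomial ℤ) - Polynomial.X ^ n =
        (-1) * ∏ e ∈ (Finset.Icc 1 K).filter (· ∣ n), Polynomial.cyclotomic e ℤ := by
      rw [← hdiv, Polynomial.prod_cyclotomic_eq_X_pow_sub_one hn.1]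
      ring
    have hprodite : ∏ e ∈ (Finset.Icc 1 K).filter (· ∣ n), Polynomial.cyclotomic e ℤ =
        ∏ d ∈ Finset.Icc 1 K,
          (Polynomial.cyclotomic d ℤ) ^ (if d ∣ n then 1 else 0) := by
      rw [Finset.prod_filter]
      exact Finset.prod_congr rfl (fun d _ => by split_ifs <;> simp)
    rw [Multiset.map_cons, Multiset.prod_cons,
      ih (fun x hx => hT x (Multiset.mem_cons_of_mem hx)), hXn, hprodite]
    have hcnt : ∀ d : ℕ, Multiset.card ((n ::ₘ T).filter (d ∣ ·)) =
        (if d ∣ n then 1 else 0) + Multiset.card (T.filter (d ∣ ·)) := by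
      intro d
      rw [Multiset.filter_cons, Multiset.card_add]
      congr 1
      split_ifs <;> simp
    have hpows : ∏ d ∈ Finset.Icc 1 K,
        (Polynomial.cyclotomic d ℤ) ^ (Multiset.card ((n ::ₘ T).filter (d ∣ ·))) =
        (∏ d ∈ Finset.Icc 1 K, (Polynomial.cyclotomic d ℤ) ^ (if d ∣ n then 1 else 0)) *
        ∏ d ∈ Finset.Icc 1 K,
          (Polynomial.cyclotomic d ℤ) ^ (Multiset.card (T.filter (d ∣ ·))) := by
      rw [← Finset.prod_mul_distrib]
      exact Finset.prod_congr rfl (fun d _ => by rw [← pow_add, hcnt d])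
    rw [hpows, Multiset.card_cons, pow_succ]
    ring


end StanleyAux

/-- (Stanley's vanishing criterion)  Let `λ ⊢ k+1` be a partition with row lengths
`lam` and hook lengths `h_1, …, h_{k+1}`, and let `σ ∈ S_{k+1}` have cycle lengths
`ℓ_1, …, ℓ_j`.  If `χ^λ(σ) ≠ 0` then `∏_i (1 - s^{ℓ_i})` divides `∏_i (1 - s^{h_i})`
in `ℤ[s]`. -/
theorem stanley_vanishing_criterion (k : ℕ) (lam : ℕ → ℕ)
    (hanti : Antitone lam)
    (hsum : ∑ i ∈ Finset.range (k + 1), lam i = k + 1)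
    (hsupp : ∀ i, k + 1 ≤ i → lam i = 0)
    (σ : Equiv.Perm (Fin (k + 1)))
    (hne : frobChar (k + 1) lam σ ≠ 0) :
    ((σ.cycleType + Multiset.replicate ((k + 1) - σ.support.card) 1).map
        (fun ℓ => 1 - (Polynomial.X : Polynomial ℤ) ^ ℓ)).prod ∣
      ∏ i ∈ Finset.range (k + 1), ∏ j ∈ Finset.range (lam i),
        (1 - (Polynomial.X : Polynomial ℤ) ^ hookLen (k + 1) lam i j) := by
  classical
  have hne' := hne
  unfold frobChar at hne'
  set L : Multiset ℕ := σ.cycleType + Multiset.replicate ((k + 1) - σ.support.card) 1 with hL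
  set v₀ : Fin (k + 1) →₀ ℕ :=
    Finsupp.equivFunOnFinite.symm (fun i : Fin (k + 1) => lam (i : ℕ) + ((k + 1) - 1 - (i : ℕ))) with hv₀
  set A₀ : MvPolynomial (Fin (k + 1)) ℤ := ∑ w : Equiv.Perm (Fin (k + 1)), (Equiv.Perm.sign w : ℤ) •
      ∏ j : Fin (k + 1), (MvPolynomial.X (w j) : MvPolynomial (Fin (k + 1)) ℤ) ^ ((k + 1) - 1 - (j : ℕ))
    with hA₀
  -- basic facts about cycle lengths
  have hLpos : ∀ ℓ ∈ L, 0 < ℓ ∧ ℓ ≤ (k + 1) := by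
    intro ℓ hl
    rw [hL, Multiset.mem_add] at hl
    rcases hl with h | h
    · have h2 := Equiv.Perm.two_le_of_mem_cycleType h
      have h3 : ℓ ≤ σ.cycleType.sum := Multiset.le_sum_of_mem h
      rw [Equiv.Perm.sum_cycleType] at h3
      have h4 : σ.support.card ≤ (k + 1) := by
        have := Finset.card_le_univ σ.support
        simpa using this
      exact ⟨by omega, by omega⟩
    · have := Multiset.eq_of_mem_replicate h
      have : ℓ = 1 := this
      omega
  -- the beta vector
  have hcoe : ⇑v₀ = fun i : Fin (k + 1) => lam (i : ℕ) + ((k + 1) - 1 - (i : ℕ)) := by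
    rw [hv₀]
    exact Equiv.apply_symm_apply Finsupp.equivFunOnFinite _
  have hbetv : ∀ i : Fin (k + 1), v₀ i = StanleyAux.bet (k + 1) lam (i : ℕ) := by
    intro i
    rw [hcoe]
    rfl
  have hv₀inj : Function.Injective ⇑v₀ := by
    intro a b hab
    rw [hcoe] at hab
    simp only at hab
    by_contra hne2
    have hvne : (a : ℕ) ≠ (b : ℕ) := fun h => hne2 (Fin.ext h)
    have ha := a.isLt
    have hb := b.isLt
    rcases Nat.lt_or_ge (a : ℕ) (b : ℕ) with h | h
    · have h1 : lam (b : ℕ) ≤ lam (a : ℕ) := hanti h.le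
      omega
    · have h' : (b : ℕ) < (a : ℕ) := by omega
      have h1 : lam (a : ℕ) ≤ lam (b : ℕ) := hanti h'.le
      omega
  set B₀ : Finset ℕ := Finset.image ⇑v₀ Finset.univ with hB₀
  have hB₀eq : B₀ = (Finset.range (k + 1)).image (StanleyAux.bet (k + 1) lam) := by
    rw [hB₀]
    ext a
    simp only [Finset.mem_image, Finset.mem_univ, true_and, Finset.mem_range]
    constructor
    · rintro ⟨i, rfl⟩
      exact ⟨(i : ℕ), i.isLt, (hbetv i).symm⟩
    · rintro ⟨n, hn, hbn⟩
      exact ⟨⟨n, hn⟩, by rw [hbetv ⟨n, hn⟩]; exact hbn⟩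
  -- key inequality, for every d ≥ 1
  have hkey : ∀ d, 0 < d →
      Multiset.card (L.filter (d ∣ ·)) ≤ StanleyAux.cN d B₀ := by
    intro d hd
    have hc := hne'
    set Lg := L.filter (d ∣ ·) with hLg
    set Lb := L.filter (fun ℓ => ¬ d ∣ ℓ) with hLb
    have hsplit : Lg + Lb = L := Multiset.filter_add_not _ _
    have hx : A₀ * (L.map (fun ℓ => ∑ i : Fin (k + 1),
        (MvPolynomial.X i : MvPolynomial (Fin (k + 1)) ℤ) ^ ℓ)).prod =
        (A₀ * (Lb.map (fun ℓ => ∑ i : Fin (k + 1),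
          (MvPolynomial.X i : MvPolynomial (Fin (k + 1)) ℤ) ^ ℓ)).prod) *
        (Lg.map (fun ℓ => ∑ i : Fin (k + 1),
          (MvPolynomial.X i : MvPolynomial (Fin (k + 1)) ℤ) ^ ℓ)).prod := by
      rw [← hsplit, Multiset.map_add, Multiset.prod_add]
      ring
    rw [hx] at hc
    refine StanleyAux.peel d hd Lg ?_ _
      (StanleyAux.isAlt_mul_prod_powsum _ StanleyAux.isAlt_bigA Lb) v₀ hv₀inj hc
    intro ℓ hℓ
    rw [hLg, Multiset.mem_filter] at hℓ
    exact ⟨hℓ.2, (hLpos ℓ hℓ.1).1⟩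
  -- hook length bounds
  have hhook : ∀ i j, i < (k + 1) → j < lam i → 0 < hookLen (k + 1) lam i j ∧ hookLen (k + 1) lam i j ≤ (k + 1) := by
    intro i j hiN hj
    have hconj1 : conjPart (k + 1) lam j ≤ (k + 1) := StanleyAux.conj_le j
    have hconj2 : i < conjPart (k + 1) lam j := (StanleyAux.conj_iff hanti hsupp i j).mpr hj
    constructor
    · unfold hookLen
      omega
    · -- hookLen ≤ (k + 1), using the total size of the partition
      set F := (Finset.range (k + 1)).filter (fun u => j < lam u) with hF
      have hiF : i ∈ F := by
        rw [hF, Finset.mem_filter, Finset.mem_range]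
        exact ⟨hiN, hj⟩
      have hsub : ∑ u ∈ F, lam u ≤ ∑ u ∈ Finset.range (k + 1), lam u :=
        Finset.sum_le_sum_of_subset (Finset.filter_subset _ _)
      have hss : lam i + ∑ u ∈ F.erase i, lam u = ∑ u ∈ F, lam u :=
        Finset.add_sum_erase F lam hiF
      have hlower : (F.erase i).card • (j + 1) ≤ ∑ u ∈ F.erase i, lam u := by
        apply Finset.card_nsmul_le_sum
        intro u hu
        have := Finset.mem_of_mem_erase hu
        rw [hF, Finset.mem_filter] at this
        omega
      have hcarderase : (F.erase i).card = conjPart (k + 1) lam j - 1 := by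
        rw [Finset.card_erase_of_mem hiF]
        rfl
      rw [smul_eq_mul, hcarderase] at hlower
      have hprodge : conjPart (k + 1) lam j - 1 ≤ (conjPart (k + 1) lam j - 1) * (j + 1) :=
        Nat.le_mul_of_pos_right _ (by omega)
      rw [hsum] at hsub
      unfold hookLen
      omega
  -- the hook multiset
  set S : Finset ((_ : ℕ) × ℕ) := (Finset.range (k + 1)).sigma (fun i => Finset.range (lam i))
    with hS
  set T : Multiset ℕ := S.val.map (fun x => hookLen (k + 1) lam x.1 x.2) with hT
  have hTmem : ∀ n ∈ T, 0 < n ∧ n ≤ (k + 1) := by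
    intro n hn
    rw [hT, Multiset.mem_map] at hn
    obtain ⟨x, hx, rfl⟩ := hn
    rw [Finset.mem_val, hS, Finset.mem_sigma, Finset.mem_range, Finset.mem_range] at hx
    exact hhook x.1 x.2 hx.1 hx.2
  have hRHS : (∏ i ∈ Finset.range (k + 1), ∏ j ∈ Finset.range (lam i),
      (1 - (Polynomial.X : Polynomial ℤ) ^ hookLen (k + 1) lam i j)) =
      (T.map (fun n => (1 : Polynomial ℤ) - Polynomial.X ^ n)).prod := by
    rw [hT, Multiset.map_map]
    rw [← Finset.prod_sigma (Finset.range (k + 1)) (fun i => Finset.range (lam i))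
      (fun x => (1 : Polynomial ℤ) - Polynomial.X ^ hookLen (k + 1) lam x.1 x.2)]
    rw [Finset.prod_eq_multiset_prod]
    rfl
  have hTcount : ∀ d, Multiset.card (T.filter (d ∣ ·)) = StanleyAux.cN d B₀ := by
    intro d
    rw [hT]
    have h1 : Multiset.filter (d ∣ ·) (S.val.map (fun x => hookLen (k + 1) lam x.1 x.2)) =
        (Multiset.filter (fun x => d ∣ hookLen (k + 1) lam x.1 x.2) S.val).map
          (fun x => hookLen (k + 1) lam x.1 x.2) := by
      rw [Multiset.filter_map]
      rfl
    rw [h1, Multiset.card_map]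
    have h2 : Multiset.filter (fun x => d ∣ hookLen (k + 1) lam x.1 x.2) S.val =
        (S.filter (fun x => d ∣ hookLen (k + 1) lam x.1 x.2)).val := by
      rw [Finset.filter_val]
    rw [h2]
    have h3 : S.filter (fun x => d ∣ hookLen (k + 1) lam x.1 x.2) =
        (Finset.range (k + 1)).sigma
          (fun i => (Finset.range (lam i)).filter (fun j => d ∣ hookLen (k + 1) lam i j)) := by
      ext x
      rw [Finset.mem_filter, hS, Finset.mem_sigma, Finset.mem_sigma, Finset.mem_filter]
      tauto
    have h4 : ((S.filter (fun x => d ∣ hookLen (k + 1) lam x.1 x.2)).val).card =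
        (S.filter (fun x => d ∣ hookLen (k + 1) lam x.1 x.2)).card := rfl
    rw [h4, h3, Finset.card_sigma]
    exact StanleyAux.total_count hanti hsupp B₀ hB₀eq
  -- put everything together
  rw [hRHS, StanleyAux.prodform (k + 1) L hLpos, StanleyAux.prodform (k + 1) T hTmem]
  have hdvd : (∏ d ∈ Finset.Icc 1 (k + 1),
      (Polynomial.cyclotomic d ℤ) ^ (Multiset.card (L.filter (d ∣ ·)))) ∣
      ∏ d ∈ Finset.Icc 1 (k + 1),
      (Polynomial.cyclotomic d ℤ) ^ (Multiset.card (T.filter (d ∣ ·))) := by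
    apply Finset.prod_dvd_prod_of_dvd
    intro d hdmem
    rw [Finset.mem_Icc] at hdmem
    apply pow_dvd_pow
    rw [hTcount d]
    exact hkey d (by omega)
  have hu1 : ((-1 : Polynomial ℤ) ^ (Multiset.card L)) *
      (∏ d ∈ Finset.Icc 1 (k + 1),
        (Polynomial.cyclotomic d ℤ) ^ (Multiset.card (L.filter (d ∣ ·)))) ∣
      ∏ d ∈ Finset.Icc 1 (k + 1),
        (Polynomial.cyclotomic d ℤ) ^ (Multiset.card (L.filter (d ∣ ·))) := by
    refine ⟨(-1 : Polynomial ℤ) ^ (Multiset.card L), ?_⟩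
    have : ((-1 : Polynomial ℤ) ^ (Multiset.card L)) *
        ((-1 : Polynomial ℤ) ^ (Multiset.card L)) = 1 := by
      rw [← pow_add]
      exact Even.neg_one_pow ⟨Multiset.card L, rfl⟩
    rw [mul_comm, ← mul_assoc, this, one_mul]
  calc ((-1 : Polynomial ℤ) ^ (Multiset.card L)) *
      (∏ d ∈ Finset.Icc 1 (k + 1),
        (Polynomial.cyclotomic d ℤ) ^ (Multiset.card (L.filter (d ∣ ·))))
      ∣ ∏ d ∈ Finset.Icc 1 (k + 1),
        (Polynomial.cyclotomic d ℤ) ^ (Multiset.card (L.filter (d ∣ ·))) := hu1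
    _ ∣ ∏ d ∈ Finset.Icc 1 (k + 1),
        (Polynomial.cyclotomic d ℤ) ^ (Multiset.card (T.filter (d ∣ ·))) := hdvd
    _ ∣ ((-1 : Polynomial ℤ) ^ (Multiset.card T)) *
        ∏ d ∈ Finset.Icc 1 (k + 1),
        (Polynomial.cyclotomic d ℤ) ^ (Multiset.card (T.filter (d ∣ ·))) :=
      dvd_mul_left _ _
end

section
/- For every n ≥ 3, the multiplicity of the irreducible S_{n+1}-representation indexed by the partition (n-1,2) in Ind_{C_{n+1}}^{S_{n+1}} ℂ equals ⌊(n-1)/2⌋. Equivalently, Sym²𝔥 ⊖ 𝔥 ⊖ ℂ occurs with multiplicity ⌊(n-1)/2⌋ in this induced representation. -/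
open Equiv Finset

/-- The row lengths of the partition `(n-1, 2)` of `n + 1`. -/
def partN2 (n : ℕ) : ℕ → ℕ := fun i => if i = 0 then n - 1 else if i = 1 then 2 else 0


section FrobAux
open MvPolynomial


lemma prod_monomial_one {σ α : Type*} [DecidableEq α] (s : Finset α) (g : α → (σ →₀ ℕ)) :
    ∏ x ∈ s, (monomial (g x) (1:ℤ)) = monomial (∑ x ∈ s, g x) 1 := by
  induction s using Finset.induction_on with
  | empty => simp [monomial_zero']
  | insert a s h ih => rw [Finset.prod_insert h, ih, monomial_mul,
      Finset.sum_insert h, one_mul]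

noncomputable def pm (N m : ℕ) : MvPolynomial (Fin N) ℤ := ∑ i, X i ^ m

def cnt {d N : ℕ} (f : Fin d → Fin N) (i : Fin N) : ℕ := #{k | f k = i}

lemma single_sum_apply {d N m : ℕ} (f : Fin d → Fin N) (i : Fin N) :
    (∑ k, Finsupp.single (f k) m) i = m * cnt f i := by
  rw [Finset.sum_apply']
  simp_rw [Finsupp.single_apply]
  rw [← Finset.sum_filter, Finset.sum_const, smul_eq_mul, mul_comm]
  rfl

lemma coeff_pm_pow (N m d : ℕ) (v : Fin N →₀ ℕ) :
    MvPolynomial.coeff v ((pm N m)^d) =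
      ((univ.filter fun f : Fin d → Fin N => ∀ i, m * cnt f i = v i).card : ℤ) := by
  have h1 : (pm N m)^d = ∑ f : Fin d → Fin N, monomial (∑ k, Finsupp.single (f k) m) 1 := by
    have : (pm N m)^d = ∏ _k : Fin d, pm N m := by simp
    rw [this]
    unfold pm
    rw [Finset.prod_univ_sum, Fintype.piFinset_univ]
    refine Finset.sum_congr rfl fun f _ => ?_
    simp_rw [X_pow_eq_monomial]
    exact prod_monomial_one _ _
  rw [h1, coeff_sum]
  simp_rw [coeff_monomial]
  rw [← Finset.sum_boole]
  refine Finset.sum_congr rfl fun f _ => ?_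
  congr 1
  rw [eq_iff_iff]
  constructor
  · intro h i; rw [← single_sum_apply f i, h]
  · intro h; ext i; rw [single_sum_apply f i]; exact h i

lemma coeff_pm_pow_zero {N m d : ℕ} (v : Fin N →₀ ℕ) (i0 : Fin N) (h : ¬ m ∣ v i0) :
    MvPolynomial.coeff v ((pm N m)^d) = 0 := by
  rw [coeff_pm_pow]
  norm_cast
  rw [Finset.card_eq_zero, Finset.filter_eq_empty_iff]
  intro f _ hf
  exact h ⟨cnt f i0, (hf i0).symm⟩

lemma card_count {N m d r : ℕ} (hm : 0 < m) (hr : r ≤ d) {a b : Fin N} (hab : a ≠ b)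
    (v : Fin N →₀ ℕ) (h0 : v a = m * (d - r)) (h1 : v b = m * r)
    (hrest : ∀ i : Fin N, i ≠ a → i ≠ b → v i = 0) :
    MvPolynomial.coeff v ((pm N m)^d) = (d.choose r : ℤ) := by
  rw [coeff_pm_pow]
  norm_cast
  have hpred : ∀ f : Fin d → Fin N,
      (∀ i, m * cnt f i = v i) ↔ (∀ i : Fin N,
        cnt f i = if i = a then d - r else if i = b then r else 0) := by
    intro f
    constructor
    · intro h i
      refine Nat.eq_of_mul_eq_mul_left hm ?_
      rw [h i]
      by_cases hi0 : i = a
      · simp [hi0, h0]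
      by_cases hi1 : i = b
      · simp [hi0, hi1, h1, Ne.symm hab]
      · simp [hi0, hi1, hrest i hi0 hi1]
    · intro h i
      rw [h i]
      by_cases hi0 : i = a
      · simp [hi0, h0]
      by_cases hi1 : i = b
      · simp [hi0, hi1, h1, Ne.symm hab]
      · simp [hi0, hi1, hrest i hi0 hi1]
  rw [Finset.filter_congr (fun f _ => by rw [hpred f])]
  rw [show d.choose r = #(Finset.powersetCard r (univ : Finset (Fin d))) by
    rw [Finset.card_powersetCard, Finset.card_univ, Fintype.card_fin]]
  refine Finset.card_bij' (fun f _ => ({k | f k = b} : Finset (Fin d)))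
    (fun s _ => fun k => if k ∈ s then b else a) ?_ ?_ ?_ ?_
  · intro f hf
    simp only [Finset.mem_filter, Finset.mem_univ, true_and] at hf
    rw [Finset.mem_powersetCard]
    refine ⟨Finset.subset_univ _, ?_⟩
    have := hf b
    rw [if_neg (Ne.symm hab), if_pos rfl] at this
    exact this
  · intro s hs
    rw [Finset.mem_powersetCard] at hs
    simp only [Finset.mem_filter, Finset.mem_univ, true_and]
    intro i
    by_cases hi0 : i = a
    · rw [if_pos hi0, hi0]
      have hc : cnt (fun k => if k ∈ s then b else a) a = #sᶜ := by
        unfold cnt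
        congr 1
        ext k
        simp only [Finset.mem_filter, Finset.mem_univ, true_and, Finset.mem_compl]
        by_cases hks : k ∈ s
        · simp [hks, Ne.symm hab]
        · simp [hks]
      rw [hc, Finset.card_compl, hs.2, Fintype.card_fin]
    rw [if_neg hi0]
    by_cases hi1 : i = b
    · rw [if_pos hi1, hi1]
      have hc : cnt (fun k => if k ∈ s then b else a) b = #s := by
        unfold cnt
        congr 1
        ext k
        simp only [Finset.mem_filter, Finset.mem_univ, true_and]
        by_cases hks : k ∈ s
        · simp [hks]
        · simp [hks, hab]
      rw [hc, hs.2]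
    · rw [if_neg hi1]
      unfold cnt
      rw [Finset.card_eq_zero, Finset.filter_eq_empty_iff]
      intro k _
      by_cases hks : k ∈ s
      · simp only [hks, if_true]
        exact fun h => hi1 h.symm
      · simp only [hks, if_false]
        exact fun h => hi0 h.symm
  · intro f hf
    simp only [Finset.mem_filter, Finset.mem_univ, true_and] at hf
    funext k
    by_cases hk : f k = b
    · simp [Finset.mem_filter, hk]
    · simp only [Finset.mem_filter, Finset.mem_univ, true_and, hk, if_false]
      by_contra h0'
      have hne : f k ≠ a := fun h => h0' h.symm
      have hz := hf (f k)
      rw [if_neg hne, if_neg hk] at hz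
      have hmem : k ∈ ({k' | f k' = f k} : Finset (Fin d)) := by simp
      rw [show ({k' | f k' = f k} : Finset (Fin d)) = ∅ from Finset.card_eq_zero.mp hz] at hmem
      exact absurd hmem (Finset.notMem_empty k)
  · intro s hs
    ext k
    simp only [Finset.mem_filter, Finset.mem_univ, true_and]
    by_cases hks : k ∈ s
    · simp [hks]
    · simp [hks, hab]

lemma perm_fix {N : ℕ} (u : Equiv.Perm (Fin N))
    (h : ∀ i : Fin N, 2 ≤ (i:ℕ) → (i:ℕ) ≤ (u i : ℕ)) :
    ∀ i : Fin N, 2 ≤ (i:ℕ) → u i = i := by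
  suffices H : ∀ K (i : Fin N), N - (i:ℕ) ≤ K → 2 ≤ (i:ℕ) → u i = i by
    intro i hi; exact H N i (by omega) hi
  intro K
  induction K with
  | zero => intro i hNi _; exact absurd hNi (by have := i.is_lt; omega)
  | succ K ih =>
    intro i hNi hi2
    by_contra hne
    have hlt : (i:ℕ) < (u i : ℕ) :=
      lt_of_le_of_ne (h i hi2) (fun hv => hne (Fin.ext hv.symm))
    have h2 : 2 ≤ ((u i) : ℕ) := le_trans hi2 (le_of_lt hlt)
    have hfix : u (u i) = u i := ih (u i) (by have := (u i).is_lt; omega) h2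
    exact hne (u.injective hfix)

lemma val_one_fin {n : ℕ} (hn : 3 ≤ n) : ((1 : Fin (n+1)) : ℕ) = 1 := by
  rw [Fin.val_one']; exact Nat.mod_eq_of_lt (by omega)

lemma perm_classify {n : ℕ} (hn : 3 ≤ n) (w : Equiv.Perm (Fin (n+1)))
    (h : ∀ i : Fin (n+1), 2 ≤ (i:ℕ) → w i = i) : w = 1 ∨ w = Equiv.swap 0 1 := by
  have hv1 : ((1 : Fin (n+1)) : ℕ) = 1 := val_one_fin hn
  have hv0 : ((0 : Fin (n+1)) : ℕ) = 0 := rfl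
  have hsmall : ∀ x : Fin (n+1), (x:ℕ) < 2 → x = 0 ∨ x = 1 := by
    intro x hx
    by_cases hx0 : (x:ℕ) = 0
    · exact Or.inl (Fin.ext (by omega))
    · exact Or.inr (Fin.ext (by omega))
  have hw : ∀ x : Fin (n+1), (x:ℕ) < 2 → ((w x) : ℕ) < 2 := by
    intro x hx
    by_contra h'
    have hfix := h (w x) (by omega)
    have := w.injective hfix
    rw [this] at h'
    omega
  have hw0 := hw 0 (by omega)
  have hw1 := hw 1 (by omega)
  have h01 : (0 : Fin (n+1)) ≠ 1 := by intro h'; have := congrArg Fin.val h'; omega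
  rcases hsmall _ hw0 with k0 | k0
  · -- w 0 = 0, so w 1 = 1
    have k1 : w 1 = 1 := by
      rcases hsmall _ hw1 with k1 | k1
      · exact absurd (w.injective (k1.trans k0.symm)) (Ne.symm h01)
      · exact k1
    left
    ext i
    by_cases hi : 2 ≤ (i:ℕ)
    · rw [h i hi]; rfl
    · rcases hsmall i (by omega) with rfl | rfl
      · rw [k0]; rfl
      · rw [k1]; rfl
  · -- w 0 = 1, so w 1 = 0
    have k1 : w 1 = 0 := by
      rcases hsmall _ hw1 with k1 | k1
      · exact k1
      · exact absurd (w.injective (k1.trans k0.symm)) (Ne.symm h01)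
    right
    ext i
    by_cases hi : 2 ≤ (i:ℕ)
    · rw [h i hi, Equiv.swap_apply_of_ne_of_ne]
      · intro h'; rw [h'] at hi; omega
      · intro h'; rw [h'] at hi; rw [hv1] at hi; omega
    · rcases hsmall i (by omega) with rfl | rfl
      · rw [k0, Equiv.swap_apply_left]
      · rw [k1, Equiv.swap_apply_right]


open Fin.NatCast

lemma rot_pow_apply (n t : ℕ) : ∀ x : Fin (n+1),
    ((finRotate (n+1))^t) x = x + (t : Fin (n+1)) := by
  induction t with
  | zero => intro x; simp
  | succ t ih =>
    intro x
    rw [pow_succ']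
    simp only [Equiv.Perm.mul_apply, finRotate_succ_apply]
    rw [ih x, Nat.cast_add, Nat.cast_one]
    exact add_assoc _ _ _

lemma rot_pow_eq_one_iff (n s : ℕ) :
    (finRotate (n+1))^s = 1 ↔ (n+1) ∣ s := by
  constructor
  · intro h
    have := congrArg (fun σ : Equiv.Perm (Fin (n+1)) => σ 0) h
    simp only [Equiv.Perm.one_apply] at this
    rw [rot_pow_apply, zero_add] at this
    exact (Fin.natCast_eq_zero).mp this
  · intro h
    ext x
    rw [rot_pow_apply, (Fin.natCast_eq_zero).mpr h, add_zero]
    rfl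

lemma rot_support (n t : ℕ) (ht1 : 1 ≤ t) (ht2 : t ≤ n) :
    ((finRotate (n+1))^t).support = Finset.univ := by
  ext x
  simp only [Equiv.Perm.mem_support, Finset.mem_univ, iff_true]
  rw [rot_pow_apply]
  intro h
  have : (t : Fin (n+1)) = 0 := by
    have := congrArg (fun y => y - x) h
    simpa [add_sub_cancel_left] using this
  rw [Fin.natCast_eq_zero] at this
  have := Nat.le_of_dvd (by omega) this
  omega

lemma aux_abstract (g m t' k : ℕ) (hgpos : 0 < g) (hcop : Nat.Coprime m t')
    (h : g * m ∣ (g * t') * k) : m ∣ k := by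
  have h2 : g * m ∣ g * (t' * k) := by rwa [← mul_assoc]
  have h3 : m ∣ t' * k := (mul_dvd_mul_iff_left (Nat.pos_iff_ne_zero.mp hgpos)).mp h2
  exact hcop.dvd_of_dvd_mul_left h3

lemma aux_gcd_dvd (n t k : ℕ) (h : (n+1) ∣ t * k) :
    ((n+1) / Nat.gcd (n+1) t) ∣ k := by
  have hgpos : 0 < Nat.gcd (n+1) t := Nat.gcd_pos_of_pos_left t (by omega)
  obtain ⟨m, hm⟩ := (Nat.gcd_dvd_left (n+1) t)
  obtain ⟨t', ht⟩ := (Nat.gcd_dvd_right (n+1) t)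
  have hdivN : (n+1) / Nat.gcd (n+1) t = m := Nat.div_eq_of_eq_mul_right hgpos hm
  have hdivt : t / Nat.gcd (n+1) t = t' := Nat.div_eq_of_eq_mul_right hgpos ht
  have hcop : Nat.Coprime m t' := by
    have := Nat.coprime_div_gcd_div_gcd (m := n+1) (n := t) hgpos
    rwa [hdivN, hdivt] at this
  rw [hdivN]
  refine aux_abstract (Nat.gcd (n+1) t) m t' k hgpos hcop ?_
  rw [← hm, ← ht]
  exact h

lemma rot_pow_pow_eq_one (n t : ℕ) :
    ((finRotate (n+1))^t)^((n+1) / Nat.gcd (n+1) t) = 1 := by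
  rw [← pow_mul, rot_pow_eq_one_iff]
  have hgpos : 0 < Nat.gcd (n+1) t := Nat.gcd_pos_of_pos_left t (by omega)
  obtain ⟨m, hm⟩ := (Nat.gcd_dvd_left (n+1) t)
  obtain ⟨t', ht⟩ := (Nat.gcd_dvd_right (n+1) t)
  have hdivN : (n+1) / Nat.gcd (n+1) t = m := Nat.div_eq_of_eq_mul_right hgpos hm
  rw [hdivN]
  refine ⟨t', ?_⟩
  calc t * m = (Nat.gcd (n+1) t * t') * m := by rw [← ht]
    _ = (Nat.gcd (n+1) t * m) * t' := by ring
    _ = (n+1) * t' := by rw [← hm]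

lemma rot_cycleType (n t : ℕ) (ht1 : 1 ≤ t) (ht2 : t ≤ n) :
    ((finRotate (n+1))^t).cycleType
      = Multiset.replicate (Nat.gcd (n+1) t) ((n+1) / Nat.gcd (n+1) t) := by
  set σ := (finRotate (n+1))^t with hσ
  set g := Nat.gcd (n+1) t with hg
  set m := (n+1) / g with hm
  have hgpos : 0 < g := Nat.gcd_pos_of_pos_left t (by omega)
  have hgm : g * m = n + 1 := Nat.mul_div_cancel' (Nat.gcd_dvd_left _ _)
  have hmpos : 0 < m := by
    rcases Nat.eq_zero_or_pos m with h | h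
    · rw [h, mul_zero] at hgm; omega
    · exact h
  have hmem : ∀ ℓ ∈ σ.cycleType, ℓ = m := by
    intro ℓ hℓ
    have hdvd1 : ℓ ∣ m := by
      have h1 : ℓ ∣ σ.cycleType.lcm := Multiset.dvd_lcm hℓ
      rw [Equiv.Perm.lcm_cycleType] at h1
      exact h1.trans (orderOf_dvd_of_pow_eq_one (rot_pow_pow_eq_one n t))
    rw [Equiv.Perm.cycleType_def, Multiset.mem_map] at hℓ
    obtain ⟨c, hc, hcard⟩ := hℓ
    rw [← Finset.mem_def] at hc
    have hcyc : c.IsCycle := (Equiv.Perm.mem_cycleFactorsFinset_iff.mp hc).1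
    obtain ⟨x, hx, -⟩ := hcyc
    have hcyc : c.IsCycle := (Equiv.Perm.mem_cycleFactorsFinset_iff.mp hc).1
    have hxc : x ∈ c.support := Equiv.Perm.mem_support.mpr hx
    have hco : c = σ.cycleOf x := Equiv.Perm.cycle_is_cycleOf hxc hc
    have hcl : c ^ ℓ = 1 := by
      rw [← hcard]
      simp only [Function.comp_apply]
      rw [← hcyc.orderOf]
      exact pow_orderOf_eq_one c
    have hfix : (σ ^ ℓ) x = x := by
      rw [← Equiv.Perm.cycleOf_pow_apply_self σ x, ← hco, hcl]
      rfl
    have hdvd2 : m ∣ ℓ := by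
      apply aux_gcd_dvd n t
      rw [hσ, ← pow_mul, rot_pow_apply] at hfix
      have hzero : ((t * ℓ : ℕ) : Fin (n+1)) = 0 := by
        have := congrArg (fun y => y - x) hfix
        simpa [add_sub_cancel_left] using this
      exact (Fin.natCast_eq_zero).mp hzero
    exact Nat.dvd_antisymm hdvd1 hdvd2
  have hcT : σ.cycleType = Multiset.replicate σ.cycleType.card m :=
    Multiset.eq_replicate_card.mpr hmem
  have hsum : σ.cycleType.sum = n + 1 := by
    rw [Equiv.Perm.sum_cycleType, rot_support n t ht1 ht2, Finset.card_univ, Fintype.card_fin]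
  rw [hcT, Multiset.sum_replicate, smul_eq_mul] at hsum
  have hcard : σ.cycleType.card = g := by
    have : σ.cycleType.card * m = g * m := by rw [hsum, hgm]
    exact Nat.eq_of_mul_eq_mul_right hmpos this
  rw [hcT, hcard]
lemma frob_val (n : ℕ) (hn : 3 ≤ n) (m d : ℕ) (hm : 1 ≤ m) (hmd : m * d = n + 1)
    (σ : Equiv.Perm (Fin (n+1)))
    (hσ : σ.cycleType + Multiset.replicate (n + 1 - σ.support.card) 1
      = Multiset.replicate d m) :
    frobChar (n+1) (partN2 n) σ =
      if m = 1 then ((n+1).choose 2 : ℤ) - (n+1) else if m = 2 then (d : ℤ) else 0 := by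
  have hv1 : ((1 : Fin (n+1)) : ℕ) = 1 := val_one_fin hn
  have h01 : (0 : Fin (n+1)) ≠ 1 := by
    intro h'
    have h'' := congrArg Fin.val h'
    rw [Fin.val_zero, hv1] at h''
    exact one_ne_zero h''.symm
  set E : Fin (n+1) →₀ ℕ :=
    Finsupp.equivFunOnFinite.symm (fun i : Fin (n+1) => partN2 n (i:ℕ) + (n + 1 - 1 - (i:ℕ)))
    with hEdef
  have hE : ∀ x : Fin (n+1), E x = partN2 n (x:ℕ) + (n - (x:ℕ)) := by
    intro x
    rw [hEdef]
    simp only [Finsupp.coe_equivFunOnFinite_symm, Nat.add_sub_cancel]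
  -- the monomial attached to each permutation
  set c : Equiv.Perm (Fin (n+1)) → (Fin (n+1) →₀ ℕ) :=
    fun w => ∑ j, Finsupp.single (w j) (n + 1 - 1 - (j:ℕ)) with hcdef
  have hc : ∀ w x, c w x = n - ((w⁻¹ x : Fin (n+1)) : ℕ) := by
    intro w x
    rw [hcdef]
    rw [Finset.sum_apply']
    simp_rw [Finsupp.single_apply]
    have : ∀ j : Fin (n+1), w j = x ↔ j = w⁻¹ x := by
      intro j; constructor
      · intro h'; rw [← h']; simp
      · intro h'; rw [h']; simp
    simp_rw [this]
    rw [Finset.sum_ite_eq' Finset.univ (w⁻¹ x) (fun j => n + 1 - 1 - (j:ℕ))]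
    simp
  -- rewrite frobChar as a sum over permutations
  have step1 : frobChar (n+1) (partN2 n) σ =
      ∑ w : Equiv.Perm (Fin (n+1)), (Equiv.Perm.sign w : ℤ) *
        (if c w ≤ E then MvPolynomial.coeff (E - c w) ((pm (n+1) m)^d) else 0) := by
    rw [frobChar, hσ, Multiset.map_replicate, Multiset.prod_replicate]
    rw [Finset.sum_mul, coeff_sum]
    refine Finset.sum_congr rfl fun w _ => ?_
    rw [smul_mul_assoc, coeff_smul, smul_eq_mul]
    congr 1
    have hmono : (∏ j : Fin (n+1), (X (w j) : MvPolynomial (Fin (n+1)) ℤ) ^ (n + 1 - 1 - (j:ℕ)))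
        = monomial (c w) 1 := by
      rw [hcdef]
      simp_rw [X_pow_eq_monomial]
      exact prod_monomial_one _ _
    rw [hmono, coeff_monomial_mul']
    by_cases h' : c w ≤ E
    · rw [if_pos h', if_pos h', one_mul]
      rfl
    · rw [if_neg h', if_neg h']
  rw [step1]
  -- kill all terms except w = 1 and w = swap 0 1
  have hone_ne : (1 : Equiv.Perm (Fin (n+1))) ≠ Equiv.swap 0 1 := by
    intro h'
    have : (0 : Fin (n+1)) = Equiv.swap 0 1 0 := by rw [← h']; rfl
    rw [Equiv.swap_apply_left] at this
    exact h01 this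
  rw [← Finset.sum_subset (Finset.subset_univ ({1, Equiv.swap 0 1} :
      Finset (Equiv.Perm (Fin (n+1)))))]
  swap
  · -- vanishing outside
    intro w _ hw
    by_cases hle : c w ≤ E
    · exfalso
      have hfix : ∀ i : Fin (n+1), 2 ≤ (i:ℕ) → w⁻¹ i = i := by
        refine perm_fix w⁻¹ ?_
        intro i hi
        have h1 := hle i
        rw [hc, hE] at h1
        have hp : partN2 n (i:ℕ) = 0 := by
          unfold partN2
          rw [if_neg (by omega), if_neg (by omega)]
        rw [hp, zero_add] at h1
        have hiv := i.is_lt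
        have huv := (w⁻¹ i).is_lt
        omega
      have hfix' : ∀ (i : Fin (n+1)), 2 ≤ (i:ℕ) → w i = i := by
        intro i hi
        conv_lhs => rw [← hfix i hi]
        exact w.apply_symm_apply i
      rcases perm_classify hn w hfix' with rfl | rfl
      · exact hw (by simp)
      · exact hw (by simp)
    · rw [if_neg hle, mul_zero]
  -- now sum over the two permutations
  rw [Finset.sum_pair hone_ne]
  -- compute term for w = 1
  have hcv1 : ∀ x : Fin (n+1), c 1 x = n - (x:ℕ) := by
    intro x; rw [hc]; rfl
  have hle1 : c 1 ≤ E := by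
    intro x
    rw [hcv1, hE]
    omega
  have hv1x : ∀ x : Fin (n+1), (E - c 1) x = partN2 n (x:ℕ) := by
    intro x
    rw [Finsupp.tsub_apply, hcv1, hE]
    have := x.is_lt
    unfold partN2
    split_ifs <;> omega
  -- values of E - c 1
  have hp0 : partN2 n ((0 : Fin (n+1)) : ℕ) = n - 1 := by rw [Fin.val_zero]; rfl
  have hp1 : partN2 n ((1 : Fin (n+1)) : ℕ) = 2 := by rw [hv1]; rfl
  have hval1_0 : (E - c 1) 0 = n - 1 := by rw [hv1x, hp0]
  have hval1_1 : (E - c 1) 1 = 2 := by rw [hv1x, hp1]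
  have hval1_r : ∀ x : Fin (n+1), x ≠ 0 → x ≠ 1 → (E - c 1) x = 0 := by
    intro x hx0 hx1
    have hx0' : (x:ℕ) ≠ 0 := fun h => hx0 (Fin.ext h)
    have hx1' : (x:ℕ) ≠ 1 := fun h => hx1 (Fin.ext (by rw [hv1]; exact h))
    rw [hv1x]; unfold partN2; rw [if_neg hx0', if_neg hx1']
  -- the swap permutation
  have hswinv : (Equiv.swap (0 : Fin (n+1)) 1)⁻¹ = Equiv.swap 0 1 := Equiv.swap_inv 0 1
  have hcsw : ∀ x : Fin (n+1), c (Equiv.swap 0 1) x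
      = n - ((Equiv.swap (0 : Fin (n+1)) 1 x : Fin (n+1)) : ℕ) := by
    intro x; rw [hc, hswinv]
  have hswval : ∀ x : Fin (n+1), ((Equiv.swap (0 : Fin (n+1)) 1 x : Fin (n+1)) : ℕ)
      = if x = 0 then 1 else if x = 1 then 0 else (x : ℕ) := by
    intro x
    by_cases hx0 : x = 0
    · subst hx0; rw [if_pos rfl, Equiv.swap_apply_left, hv1]
    by_cases hx1 : x = 1
    · subst hx1; rw [if_neg hx0, if_pos rfl, Equiv.swap_apply_right, Fin.val_zero]
    · rw [if_neg hx0, if_neg hx1, Equiv.swap_apply_of_ne_of_ne hx0 hx1]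
  have hlesw : c (Equiv.swap 0 1) ≤ E := by
    intro x
    rw [hcsw, hE, hswval]
    by_cases hx0 : x = 0
    · subst hx0; rw [if_pos rfl, hp0, Fin.val_zero]; omega
    by_cases hx1 : x = 1
    · subst hx1; rw [if_neg hx0, if_pos rfl, hp1, hv1]; omega
    · rw [if_neg hx0, if_neg hx1]; omega
  have hvalsw : ∀ x : Fin (n+1), (E - c (Equiv.swap 0 1)) x
      = if x = 0 then n else if x = 1 then 1 else 0 := by
    intro x
    rw [Finsupp.tsub_apply, hcsw, hE, hswval]
    by_cases hx0 : x = 0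
    · subst hx0
      rw [if_pos rfl, if_pos rfl, hp0, Fin.val_zero]
      omega
    by_cases hx1 : x = 1
    · subst hx1
      rw [if_neg hx0, if_neg hx0, if_pos rfl, if_pos rfl, hp1, hv1]
      omega
    · have hx0' : (x:ℕ) ≠ 0 := fun h => hx0 (Fin.ext h)
      have hx1' : (x:ℕ) ≠ 1 := fun h => hx1 (Fin.ext (by rw [hv1]; exact h))
      rw [if_neg hx0, if_neg hx0, if_neg hx1, if_neg hx1]
      unfold partN2
      rw [if_neg hx0', if_neg hx1']
      omega
  have hvalsw_0 : (E - c (Equiv.swap 0 1)) 0 = n := by rw [hvalsw, if_pos rfl]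
  have hvalsw_1 : (E - c (Equiv.swap 0 1)) 1 = 1 := by
    rw [hvalsw, if_neg (Ne.symm h01), if_pos rfl]
  have hvalsw_r : ∀ x : Fin (n+1), x ≠ 0 → x ≠ 1 → (E - c (Equiv.swap 0 1)) x = 0 := by
    intro x hx0 hx1; rw [hvalsw, if_neg hx0, if_neg hx1]
  -- signs
  have hsign1 : ((Equiv.Perm.sign (1 : Equiv.Perm (Fin (n+1))) : ℤˣ) : ℤ) = 1 := by
    rw [Equiv.Perm.sign_one]; rfl
  have hsignsw : ((Equiv.Perm.sign (Equiv.swap (0 : Fin (n+1)) 1) : ℤˣ) : ℤ) = -1 := by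
    rw [Equiv.Perm.sign_swap h01, Units.val_neg, Units.val_one]
  rw [if_pos hle1, if_pos hlesw, hsign1, hsignsw]
  by_cases hm1 : m = 1
  · subst hm1
    have hd : d = n + 1 := by omega
    rw [if_pos rfl]
    rw [card_count (one_pos) (show 2 ≤ d by omega) h01 _
      (by rw [hval1_0]; omega) (by rw [hval1_1]; omega) hval1_r]
    rw [card_count (one_pos) (show 1 ≤ d by omega) h01 _
      (by rw [hvalsw_0]; omega) (by rw [hvalsw_1]; omega) hvalsw_r]
    rw [hd, Nat.choose_one_right]
    push_cast
    ring
  by_cases hm2 : m = 2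
  · subst hm2
    rw [if_neg hm1, if_pos rfl]
    have hd : 2 * d = n + 1 := hmd
    rw [card_count (by omega) (show 1 ≤ d by omega) h01 _
      (by rw [hval1_0]; omega) (by rw [hval1_1]) hval1_r]
    rw [coeff_pm_pow_zero _ 1 (by rw [hvalsw_1]; decide)]
    rw [Nat.choose_one_right]
    ring
  · rw [if_neg hm1, if_neg hm2]
    have hm3 : 3 ≤ m := by omega
    rw [coeff_pm_pow_zero _ 1 (by
      rw [hval1_1]
      intro hdvd
      have := Nat.le_of_dvd (by norm_num) hdvd
      omega)]
    rw [coeff_pm_pow_zero _ 1 (by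
      rw [hvalsw_1]
      intro hdvd
      have := Nat.dvd_one.mp hdvd
      omega)]
    ring

end FrobAux

/-- For every `n ≥ 3`, the multiplicity of the irreducible `S_{n+1}`-representation
`ρ_{(n-1,2)}` (i.e. `Sym²𝔥 ⊖ 𝔥 ⊖ ℂ`) in `Ind_{C_{n+1}}^{S_{n+1}} ℂ` — computed
by Frobenius reciprocity as `(1/(n+1)) ∑_t χ^{(n-1,2)}(g^t)` for `g` the `(n+1)`-cycle —
equals `⌊(n-1)/2⌋`. -/
theorem mult_partN2_in_ind_cyclic (n : ℕ) (hn : 3 ≤ n) :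
    (1 / ((n : ℂ) + 1)) * ∑ t ∈ Finset.range (n + 1),
        (frobChar (n + 1) (partN2 n) ((finRotate (n + 1)) ^ t) : ℂ) =
      (((n - 1) / 2 : ℕ) : ℂ) := by
  have key : ∀ t ∈ Finset.range (n+1), frobChar (n+1) (partN2 n) ((finRotate (n+1)) ^ t)
      = (if t = 0 then ((n+1).choose 2 : ℤ) - (n+1) else 0)
        + (if 2 * t = n + 1 then (t : ℤ) else 0) := by
    intro t ht
    rw [Finset.mem_range] at ht
    by_cases ht0 : t = 0
    · subst ht0
      rw [pow_zero, if_pos rfl, if_neg (by omega)]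
      rw [frob_val n hn 1 (n+1) le_rfl (by omega) 1 (by
        rw [Equiv.Perm.cycleType_one, Equiv.Perm.support_one]
        simp)]
      rw [if_pos rfl, add_zero]
    · have ht1 : 1 ≤ t := by omega
      have ht2 : t ≤ n := by omega
      set g := Nat.gcd (n+1) t with hgdef
      set m := (n+1) / g with hmdef
      have hgpos : 0 < g := Nat.gcd_pos_of_pos_left t (by omega)
      have hgm : g * m = n + 1 := Nat.mul_div_cancel' (Nat.gcd_dvd_left _ _)
      have hgt : g ∣ t := Nat.gcd_dvd_right _ _
      have hglet : g ≤ t := Nat.le_of_dvd (by omega) hgt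
      have hm1 : 1 ≤ m := by
        rcases Nat.eq_zero_or_pos m with h | h
        · rw [h, mul_zero] at hgm; omega
        · exact h
      have hσ : ((finRotate (n+1))^t).cycleType
          + Multiset.replicate (n + 1 - ((finRotate (n+1))^t).support.card) 1
          = Multiset.replicate g m := by
        rw [rot_cycleType n t ht1 ht2, rot_support n t ht1 ht2, Finset.card_univ,
          Fintype.card_fin, Nat.sub_self, Multiset.replicate_zero, add_zero]
      rw [frob_val n hn m g hm1 (by rw [mul_comm]; exact hgm) _ hσ]
      have hmne1 : m ≠ 1 := by
        intro h
        rw [h, mul_one] at hgm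
        omega
      rw [if_neg hmne1, if_neg ht0]
      by_cases h2 : 2 * t = n + 1
      · have hgt' : g = t := by
          rw [hgdef, ← h2, Nat.gcd_comm]
          exact Nat.gcd_eq_left (dvd_mul_left t 2)
        have hm2 : m = 2 := by
          have h' : g * m = g * 2 := by rw [hgm, ← h2, hgt']; ring
          exact Nat.eq_of_mul_eq_mul_left hgpos h'
        rw [if_pos hm2, if_pos h2, hgt', zero_add]
      · have hm2 : m ≠ 2 := by
          intro h
          rw [h] at hgm
          obtain ⟨k, hk⟩ := hgt
          have hkne : k ≠ 0 := by intro h0; rw [h0, mul_zero] at hk; omega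
          have hklt : k < 2 := by
            by_contra h'
            have h'' : g * 2 ≤ g * k := Nat.mul_le_mul_left g (by omega)
            omega
          have hk1 : k = 1 := by omega
          rw [hk1, mul_one] at hk
          rw [← hk] at hgm
          exact h2 (by omega)
        rw [if_neg hm2, if_neg h2, zero_add]
  -- sum it up over t
  have hZ : (∑ t ∈ Finset.range (n+1), frobChar (n+1) (partN2 n) ((finRotate (n+1)) ^ t))
      = ((n+1) : ℤ) * (((n - 1) / 2 : ℕ) : ℤ) := by
    rw [Finset.sum_congr rfl key, Finset.sum_add_distrib]
    rw [Finset.sum_ite_eq' (Finset.range (n+1)) 0 (fun _ => ((n+1).choose 2 : ℤ) - (n+1))]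
    rw [if_pos (Finset.mem_range.mpr (by omega))]
    rcases Nat.even_or_odd n with ⟨r, hr⟩ | ⟨r, hr⟩
    · have hzero : (∑ t ∈ Finset.range (n+1), if 2 * t = n + 1 then (t : ℤ) else 0) = 0 := by
        apply Finset.sum_eq_zero
        intro t _
        rw [if_neg (by omega)]
      rw [hzero, add_zero]
      have hche : (n+1).choose 2 = (n+1) * r := by
        rw [Nat.choose_two_right, Nat.add_sub_cancel, hr]
        rw [show (r + r + 1) * (r + r) = ((r + r + 1) * r) * 2 by ring]
        exact Nat.mul_div_cancel _ (by omega)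
      have hd2 : (n - 1) / 2 = r - 1 := by omega
      have hr1 : 1 ≤ r := by omega
      rw [hd2, hche, hr]
      push_cast [Nat.cast_sub hr1]
      ring
    · have hone : (∑ t ∈ Finset.range (n+1), if 2 * t = n + 1 then (t : ℤ) else 0)
          = ((r + 1 : ℕ) : ℤ) := by
        have hstep : ∀ t : ℕ, (if 2 * t = n + 1 then (t : ℤ) else 0)
            = (if t = r + 1 then (t : ℤ) else 0) := by
          intro t
          by_cases h : t = r + 1
          · rw [if_pos h, if_pos (by omega)]
          · rw [if_neg (by omega), if_neg h]
        rw [Finset.sum_congr rfl (fun t _ => hstep t)]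
        rw [Finset.sum_ite_eq' (Finset.range (n+1)) (r+1) (fun t => (t : ℤ))]
        rw [if_pos (Finset.mem_range.mpr (by omega))]
      rw [hone]
      have hche : (n+1).choose 2 = (r + 1) * (2 * r + 1) := by
        rw [Nat.choose_two_right, Nat.add_sub_cancel, hr]
        rw [show (2 * r + 1 + 1) * (2 * r + 1) = ((r + 1) * (2 * r + 1)) * 2 by ring]
        exact Nat.mul_div_cancel _ (by omega)
      have hd2 : (n - 1) / 2 = r := by omega
      rw [hd2, hche, hr]
      push_cast
      ring
  have hcast : (∑ t ∈ Finset.range (n + 1),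
        ((frobChar (n + 1) (partN2 n) ((finRotate (n + 1)) ^ t) : ℤ) : ℂ))
      = ((((n+1) : ℤ) * (((n - 1) / 2 : ℕ) : ℤ) : ℤ) : ℂ) := by
    rw [← Int.cast_sum, hZ]
  rw [hcast]
  have hne : (n : ℂ) + 1 ≠ 0 := by
    have h' : ((n + 1 : ℕ) : ℂ) ≠ 0 := Nat.cast_ne_zero.mpr (by omega)
    simpa using h'
  rw [Int.cast_mul, Int.cast_add, Int.cast_one, Int.cast_natCast, Int.cast_natCast]
  rw [one_div, inv_mul_cancel_left₀ hne]
end
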